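/- arXiv:2408.15375 — 2 statements merged into one kernel-verified Lean document; each statement's English description precedes it below -/
import Mathlib

section
/- Let N ≥ 1 and let γ : [0,1] → ℝ^N be a C¹ path with γ(0) = p and γ(1) = q, p ≠ q, such that each component function γᵢ : [0,1] → ℝ is monotone. Then the 2-energy satisfies E₂ = ∫₀¹ s(t)²·‖γ'(t)‖₂ dt ≥ (1/3)·‖q − p‖₃³ = (1/3)·Σᵢ₌₁^N |qᵢ − pᵢ|³, where s(t) = ∫₀ᵗ ‖γ'(u)‖₂ du is the arc-length function. -/
/-- Theorem 2: for a C¹ path `γ : [0,1] → ℝ^N` from `p` to `q` (`p ≠ q`) each of whose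
component functions is monotone, the 2-energy `E₂ = ∫₀¹ s(t)²·‖γ'(t)‖₂ dt` satisfies
`E₂ ≥ (1/3)·‖q − p‖₃³ = (1/3)·Σᵢ |qᵢ − pᵢ|³`, where `s` is the arc-length function. -/
theorem stmt_4 (N : ℕ) (hN : 1 ≤ N) (γ : ℝ → EuclideanSpace ℝ (Fin N))
    (p q : EuclideanSpace ℝ (Fin N))
    (hγ : ContDiffOn ℝ 1 γ (Set.Icc 0 1))
    (h0 : γ 0 = p) (h1 : γ 1 = q) (hpq : p ≠ q)
    (hmono : ∀ i : Fin N, MonotoneOn (fun t => γ t i) (Set.Icc 0 1) ∨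
      AntitoneOn (fun t => γ t i) (Set.Icc 0 1))
    (s : ℝ → ℝ)
    (hs : ∀ t, s t = ∫ u in (0:ℝ)..t, ‖derivWithin γ (Set.Icc 0 1) u‖) :
    (1 / 3) * ∑ i : Fin N, |q i - p i| ^ 3 ≤
      ∫ t in (0:ℝ)..1, s t ^ 2 * ‖derivWithin γ (Set.Icc 0 1) t‖ := by
  set I : Set ℝ := Set.Icc 0 1 with hI
  set γ' : ℝ → EuclideanSpace ℝ (Fin N) := derivWithin γ I with hγ'
  set g : ℝ → ℝ := fun u => ‖γ' u‖ with hg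
  have hud : UniqueDiffOn ℝ I := uniqueDiffOn_Icc one_pos
  -- γ' continuous on I
  have hγ'cont : ContinuousOn γ' I := hγ.continuousOn_derivWithin hud le_rfl
  have hgcont : ContinuousOn g I := hγ'cont.norm
  -- integrability of g on [0,1]
  have hgint : IntervalIntegrable g MeasureTheory.volume 0 1 := by
    apply ContinuousOn.intervalIntegrable
    rwa [Set.uIcc_of_le (by norm_num : (0:ℝ) ≤ 1)]
  -- s is continuous on [0,1]
  have hscont : ContinuousOn s I := by
    have := intervalIntegral.continuousOn_primitive_interval
      (f := g) (μ := MeasureTheory.volume) (a := 0) (b := 1)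
      (by rw [Set.uIcc_of_le (by norm_num : (0:ℝ) ≤ 1)]; exact hgcont.integrableOn_Icc)
    rw [Set.uIcc_of_le (by norm_num : (0:ℝ) ≤ 1)] at this
    exact this.congr (fun t _ => hs t)
  -- s has derivative g t at interior points
  have hsderiv : ∀ t ∈ Set.Ioo (0:ℝ) 1, HasDerivAt s (g t) t := by
    intro t ht
    have htI : I ∈ nhds t := Icc_mem_nhds ht.1 ht.2
    have hct : ContinuousAt g t := hgcont.continuousAt htI
    have hint : IntervalIntegrable g MeasureTheory.volume 0 t :=
      hgint.mono_set (by rw [Set.uIcc_of_le (le_of_lt ht.1), Set.uIcc_of_le (by norm_num : (0:ℝ) ≤ 1)]; exact Set.Icc_subset_Icc le_rfl (le_of_lt ht.2))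
    have hmeas : StronglyMeasurableAtFilter g (nhds t) MeasureTheory.volume :=
      ContinuousOn.stronglyMeasurableAtFilter isOpen_Ioo
        (hgcont.mono Set.Ioo_subset_Icc_self) t ht
    have := intervalIntegral.integral_hasDerivAt_right hint hmeas hct
    exact this.congr_of_eventuallyEq (Filter.Eventually.of_forall fun u => (hs u))
  have h01 : (0:ℝ) ≤ 1 := by norm_num
  -- s 0 = 0
  have hs0 : s 0 = 0 := by rw [hs]; simp
  -- L := s 1, nonneg
  have hsnonneg : 0 ≤ s 1 := by
    rw [hs]
    exact intervalIntegral.integral_nonneg h01 (fun u _ => norm_nonneg _)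
  -- energy = (s 1)^3 / 3 via FTC
  have hFcont : ContinuousOn (fun t => s t ^ 3 / 3) I := by
    exact (hscont.pow 3).div_const 3
  have hintg2 : IntervalIntegrable (fun t => s t ^ 2 * g t) MeasureTheory.volume 0 1 := by
    apply ContinuousOn.intervalIntegrable
    rw [Set.uIcc_of_le h01]
    exact (hscont.pow 2).mul hgcont
  have henergy : (∫ t in (0:ℝ)..1, s t ^ 2 * g t) = s 1 ^ 3 / 3 := by
    have := intervalIntegral.integral_eq_sub_of_hasDeriv_right_of_le h01 hFcont
      (f' := fun t => s t ^ 2 * g t)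
      (fun t ht => by
        have h := ((hsderiv t ht).pow 3).div_const 3
        have : HasDerivAt (fun t => s t ^ 3 / 3) (s t ^ 2 * g t) t := by
          exact h.congr_deriv (by ring)
        exact this.hasDerivWithinAt) hintg2
    rw [this, hs0]; ring
  -- FTC for γ : q - p = ∫ γ'
  have hγ'int : IntervalIntegrable γ' MeasureTheory.volume 0 1 := by
    apply ContinuousOn.intervalIntegrable
    rwa [Set.uIcc_of_le h01]
  have hqp : q - p = ∫ t in (0:ℝ)..1, γ' t := by
    have := intervalIntegral.integral_eq_sub_of_hasDeriv_right_of_le h01 (hγ.continuousOn)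
      (f' := γ')
      (fun t ht => by
        have htI : I ∈ nhds t := Icc_mem_nhds ht.1 ht.2
        have hd : DifferentiableWithinAt ℝ γ I t :=
          (hγ.differentiableOn one_ne_zero) t ⟨le_of_lt ht.1, le_of_lt ht.2⟩
        have := (hd.hasDerivWithinAt).hasDerivAt htI
        exact this.hasDerivWithinAt) hγ'int
    rw [this, h0, h1]
  -- ‖q - p‖ ≤ s 1
  have hL2 : ‖q - p‖ ≤ s 1 := by
    rw [hqp, hs]
    exact intervalIntegral.norm_integral_le_integral_norm h01
  -- ℓ³ ≤ ℓ² bound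
  have hsum : ∑ i : Fin N, |q i - p i| ^ 3 ≤ ‖q - p‖ ^ 3 := by
    have hnorm2 : ‖q - p‖ ^ 2 = ∑ i : Fin N, |q i - p i| ^ 2 := by
      rw [EuclideanSpace.norm_eq]
      rw [Real.sq_sqrt (Finset.sum_nonneg fun i _ => sq_nonneg _)]
      simp [Real.norm_eq_abs, PiLp.sub_apply]
    calc ∑ i : Fin N, |q i - p i| ^ 3
        ≤ ∑ i : Fin N, ‖q - p‖ * |q i - p i| ^ 2 := by
          apply Finset.sum_le_sum
          intro i _
          have hle : |q i - p i| ≤ ‖q - p‖ := by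
            have h2 : |q i - p i| ^ 2 ≤ ‖q - p‖ ^ 2 := by
              rw [hnorm2]
              exact Finset.single_le_sum (f := fun j => |q j - p j| ^ 2)
                (fun j _ => sq_nonneg _) (Finset.mem_univ i)
            nlinarith [abs_nonneg (q i - p i), norm_nonneg (q - p)]
          calc |q i - p i| ^ 3 = |q i - p i| * |q i - p i| ^ 2 := by ring
            _ ≤ ‖q - p‖ * |q i - p i| ^ 2 :=
              mul_le_mul_of_nonneg_right hle (sq_nonneg _)
      _ = ‖q - p‖ * ∑ i : Fin N, |q i - p i| ^ 2 := by rw [Finset.mul_sum]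
      _ = ‖q - p‖ * ‖q - p‖ ^ 2 := by rw [hnorm2]
      _ = ‖q - p‖ ^ 3 := by ring
  have hfinal : ‖q - p‖ ^ 3 ≤ s 1 ^ 3 :=
    pow_le_pow_left₀ (norm_nonneg _) hL2 3
  calc (1 / 3) * ∑ i : Fin N, |q i - p i| ^ 3
      ≤ (1 / 3) * (s 1 ^ 3) := by
        apply mul_le_mul_of_nonneg_left (hsum.trans hfinal); norm_num
    _ = s 1 ^ 3 / 3 := by ring
    _ = ∫ t in (0:ℝ)..1, s t ^ 2 * g t := henergy.symm
    _ = ∫ t in (0:ℝ)..1, s t ^ 2 * ‖derivWithin γ I t‖ := rfl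
end

section
/- Let n ≥ 1 and let γ : [0,1] → (ℝ³)ⁿ ≅ ℝ^{3n} be a C¹ path with γ(0) = A, γ(1) = B, A ≠ B, such that every scalar coordinate function of γ (all 3n of them) is monotone. Then the 2-energy satisfies E₂ = ∫₀¹ s(t)²·‖γ'(t)‖ dt ≥ (1/3)·‖B − A‖₃³, where s(t) = ∫₀ᵗ ‖γ'(u)‖ du and ‖B − A‖₃³ = Σₖ |Bₖ − Aₖ|³ over all 3n coordinates. -/
open Set intervalIntegral MeasureTheory


set_option maxHeartbeats 1000000 in
/-- Theorem 3(iii): for a C¹ path `γ : [0,1] → (ℝ³)ⁿ` (Euclidean product norm, realized as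
the `L²`-product `PiLp 2` of `n` copies of `ℝ³`) from `A` to `B` with `A ≠ B`, all of whose
`3n` scalar coordinate functions are monotone, the 2-energy satisfies
`E₂ = ∫₀¹ s(t)²·‖γ'(t)‖ dt ≥ (1/3)·‖B − A‖₃³ = (1/3)·Σₖ |Bₖ − Aₖ|³`. -/
theorem stmt_10 (n : ℕ) (hn : 1 ≤ n)
    (γ : ℝ → PiLp 2 (fun _ : Fin n => EuclideanSpace ℝ (Fin 3)))
    (A B : PiLp 2 (fun _ : Fin n => EuclideanSpace ℝ (Fin 3)))
    (hγ : ContDiffOn ℝ 1 γ (Set.Icc 0 1))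
    (h0 : γ 0 = A) (h1 : γ 1 = B) (hAB : A ≠ B)
    (hmono : ∀ (j : Fin n) (k : Fin 3),
      MonotoneOn (fun t => γ t j k) (Set.Icc 0 1) ∨
        AntitoneOn (fun t => γ t j k) (Set.Icc 0 1))
    (s : ℝ → ℝ)
    (hs : ∀ t, s t = ∫ u in (0:ℝ)..t, ‖derivWithin γ (Set.Icc 0 1) u‖) :
    (1 / 3) * ∑ j : Fin n, ∑ k : Fin 3, |B j k - A j k| ^ 3 ≤
      ∫ t in (0:ℝ)..1, s t ^ 2 * ‖derivWithin γ (Set.Icc 0 1) t‖ := by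
  set γ' := derivWithin γ (Set.Icc 0 1) with hγ'def
  have hud : UniqueDiffOn ℝ (Icc (0:ℝ) 1) := uniqueDiffOn_Icc one_pos
  have hγ'cont : ContinuousOn γ' (Icc 0 1) :=
    hγ.continuousOn_derivWithin hud le_rfl
  have hncont : ContinuousOn (fun u => ‖γ' u‖) (Icc 0 1) := hγ'cont.norm
  have hnint : IntervalIntegrable (fun u => ‖γ' u‖) volume 0 1 :=
    hncont.intervalIntegrable_of_Icc zero_le_one
  -- s continuous on Icc
  have hscont : ContinuousOn s (Icc 0 1) := by
    have hI : Icc (0:ℝ) 1 = uIcc 0 1 := (uIcc_of_le zero_le_one).symm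
    have := intervalIntegral.continuousOn_primitive_interval'
      (f := fun u => ‖γ' u‖) (μ := volume) (b₁ := 0) (b₂ := 1) (a := 0) hnint
      (by rw [← hI]; exact left_mem_Icc.2 zero_le_one)
    rw [← hI] at this
    exact this.congr fun t _ => hs t
  -- s derivative at interior points
  have hsderiv : ∀ x ∈ Ioo (0:ℝ) 1, HasDerivAt s ‖γ' x‖ x := by
    intro x hx
    have hIcc : Icc (0:ℝ) 1 ∈ nhds x := Icc_mem_nhds hx.1 hx.2
    have hca : ContinuousAt (fun u => ‖γ' u‖) x := hncont.continuousAt hIcc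
    have hint : IntervalIntegrable (fun u => ‖γ' u‖) volume 0 x :=
      (hncont.mono (Icc_subset_Icc le_rfl hx.2.le)).intervalIntegrable_of_Icc hx.1.le
    have hmeas : StronglyMeasurableAtFilter (fun u => ‖γ' u‖) (nhds x) volume :=
      ⟨Icc 0 1, hIcc, (hncont.aestronglyMeasurable measurableSet_Icc)⟩
    have hd := intervalIntegral.integral_hasDerivAt_right hint hmeas hca
    exact hd.congr_of_eventuallyEq (Filter.Eventually.of_forall fun t => hs t)
  have hs0 : s 0 = 0 := by rw [hs 0, intervalIntegral.integral_same]
  have hs1nonneg : 0 ≤ s 1 := by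
    rw [hs 1]
    exact intervalIntegral.integral_nonneg zero_le_one fun u _ => norm_nonneg _
  -- RHS = s(1)^3 / 3
  have hRHS : ∫ t in (0:ℝ)..1, s t ^ 2 * ‖γ' t‖ = s 1 ^ 3 / 3 := by
    have hF : ∀ x ∈ Ioo (0:ℝ) 1,
        HasDerivWithinAt (fun t => s t ^ 3 / 3) (s x ^ 2 * ‖γ' x‖) (Ioi x) x := by
      intro x hx
      have := (((hsderiv x hx).pow 3).div_const 3)
      simpa [mul_comm, mul_assoc, mul_div_assoc] using this.hasDerivWithinAt
    have hcontF : ContinuousOn (fun t => s t ^ 3 / 3) (Icc 0 1) :=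
      ((hscont.pow 3).div_const 3)
    have hintF : IntervalIntegrable (fun t => s t ^ 2 * ‖γ' t‖) volume 0 1 :=
      ((hscont.pow 2).mul hncont).intervalIntegrable_of_Icc zero_le_one
    rw [intervalIntegral.integral_eq_sub_of_hasDeriv_right_of_le zero_le_one hcontF hF hintF,
      hs0]
    ring
  -- B - A = ∫ γ'
  have hBA : ‖B - A‖ ≤ s 1 := by
    haveI : ContinuousSMul ℝ (PiLp 2 fun _ : Fin n => EuclideanSpace ℝ (Fin 3)) :=
      IsBoundedSMul.continuousSMul
    have hγd : ∀ x ∈ Ioo (0:ℝ) 1, HasDerivWithinAt γ (γ' x) (Ioi x) x := by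
      intro x hx
      have hdx : HasDerivWithinAt γ (γ' x) (Icc 0 1) x :=
        (hγ.differentiableOn one_ne_zero x (Ioo_subset_Icc_self hx)).hasDerivWithinAt
      exact hdx.mono_of_mem_nhdsWithin (Icc_mem_nhdsGT_of_mem ⟨le_of_lt hx.1, hx.2⟩)
    have hint : IntervalIntegrable γ' volume 0 1 :=
      hγ'cont.intervalIntegrable_of_Icc zero_le_one
    have heq : ∫ t in (0:ℝ)..1, γ' t = B - A := by
      rw [intervalIntegral.integral_eq_sub_of_hasDeriv_right_of_le zero_le_one
        (hγ.continuousOn) hγd hint, h0, h1]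
    calc ‖B - A‖ = ‖∫ t in (0:ℝ)..1, γ' t‖ := by rw [heq]
      _ ≤ ∫ t in (0:ℝ)..1, ‖γ' t‖ :=
          intervalIntegral.norm_integral_le_integral_norm zero_le_one
      _ = s 1 := (hs 1).symm
  -- coordinatewise bound
  have hsum : ∑ j : Fin n, ∑ k : Fin 3, |B j k - A j k| ^ 3 ≤ s 1 ^ 3 := by
    have hnormsq : ∑ j : Fin n, ∑ k : Fin 3, (B j k - A j k) ^ 2 = ‖B - A‖ ^ 2 := by
      rw [PiLp.norm_sq_eq_of_L2]
      refine Finset.sum_congr rfl fun j _ => ?_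
      rw [EuclideanSpace.norm_eq, Real.sq_sqrt (by positivity)]
      refine Finset.sum_congr rfl fun k _ => ?_
      have : (B - A) j k = B j k - A j k := rfl
      rw [this, Real.norm_eq_abs, sq_abs]
    have habs : ∀ (j : Fin n) (k : Fin 3), |B j k - A j k| ≤ s 1 := by
      intro j k
      have h1k : (B j k - A j k) ^ 2 ≤ ‖B - A‖ ^ 2 := by
        rw [← hnormsq]
        calc (B j k - A j k) ^ 2
            ≤ ∑ k' : Fin 3, (B j k' - A j k') ^ 2 :=
              Finset.single_le_sum (f := fun k' => (B j k' - A j k') ^ 2)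
                (fun i _ => sq_nonneg _) (Finset.mem_univ k)
          _ ≤ ∑ j' : Fin n, ∑ k' : Fin 3, (B j' k' - A j' k') ^ 2 :=
              Finset.single_le_sum
                (f := fun j' => ∑ k' : Fin 3, (B j' k' - A j' k') ^ 2)
                (fun i _ => Finset.sum_nonneg fun _ _ => sq_nonneg _) (Finset.mem_univ j)
      have hd : |B j k - A j k| ≤ ‖B - A‖ := by
        nlinarith [abs_nonneg (B j k - A j k), norm_nonneg (B - A),
          sq_abs (B j k - A j k)]
      exact hd.trans hBA
    calc ∑ j : Fin n, ∑ k : Fin 3, |B j k - A j k| ^ 3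
        ≤ ∑ j : Fin n, ∑ k : Fin 3, s 1 * (B j k - A j k) ^ 2 := by
          refine Finset.sum_le_sum fun j _ => Finset.sum_le_sum fun k _ => ?_
          have : |B j k - A j k| ^ 3 = |B j k - A j k| * (B j k - A j k) ^ 2 := by
            rw [← sq_abs]; ring
          rw [this]
          exact mul_le_mul_of_nonneg_right (habs j k) (sq_nonneg _)
      _ = s 1 * ‖B - A‖ ^ 2 := by rw [← hnormsq, Finset.mul_sum]; simp [Finset.mul_sum]
      _ ≤ s 1 * s 1 ^ 2 := by
          refine mul_le_mul_of_nonneg_left (pow_le_pow_left₀ (norm_nonneg _) hBA 2) hs1nonneg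
      _ = s 1 ^ 3 := by ring
  rw [hRHS]
  linarith
end
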